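/- Let u₁, u₂, u₃ be three distinct points on the circle of radius r centered at the origin in ℝ². If r ≤ 2M and d(uᵢ, uⱼ) ≥ M for all i ≠ j, then the inscribed angle ∠u₁u₂u₃ satisfies arcsin(1/4) ≤ ∠u₁u₂u₃ ≤ 2·arccos(1/4). -/

import Mathlib

open EuclideanGeometry Real Metric

section aux

def factFinrankEuclidean2 : Fact (Module.finrank ℝ (EuclideanSpace ℝ (Fin 2)) = 2) :=
  ⟨finrank_euclideanSpace_fin⟩

noncomputable def orientedEuclidean2 : Module.Oriented ℝ (EuclideanSpace ℝ (Fin 2)) (Fin 2) :=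
  ⟨(EuclideanSpace.basisFun (Fin 2) ℝ).toBasis.orientation⟩

attribute [local instance] factFinrankEuclidean2 orientedEuclidean2

lemma sin_abs_eq {x : ℝ} (h1 : -π < x) (h2 : x ≤ π) : Real.sin |x| = |Real.sin x| := by
  rcases le_or_gt 0 x with hx | hx
  · rw [abs_of_nonneg hx, abs_of_nonneg (Real.sin_nonneg_of_nonneg_of_le_pi hx h2)]
  · rw [abs_of_neg hx, Real.sin_neg,
      abs_of_nonpos (Real.sin_nonpos_of_nonpos_of_neg_pi_le hx.le h1.le)]

/-- Law of sines on a sphere, for the unoriented angle. -/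
lemma sin_angle_eq {s : EuclideanGeometry.Sphere (EuclideanSpace ℝ (Fin 2))}
    {p₁ p₂ p₃ : EuclideanSpace ℝ (Fin 2)} (hp₁ : p₁ ∈ s) (hp₂ : p₂ ∈ s) (hp₃ : p₃ ∈ s)
    (hp₁p₂ : p₁ ≠ p₂) (hp₁p₃ : p₁ ≠ p₃) (hp₂p₃ : p₂ ≠ p₃) :
    Real.sin (∠ p₁ p₂ p₃) = dist p₁ p₃ / (2 * s.radius) := by
  have key := EuclideanGeometry.Sphere.dist_div_sin_oangle_eq_two_mul_radius hp₁ hp₂ hp₃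
    hp₁p₂ hp₁p₃ hp₂p₃
  have hd : 0 < dist p₁ p₃ := dist_pos.2 hp₁p₃
  have hsne : |Real.Angle.sin (∡ p₁ p₂ p₃)| ≠ 0 := by
    intro h
    rw [h, div_zero] at key
    have hrad0 : s.radius = 0 := by linarith
    have e1 : dist p₁ s.center = 0 := by rw [hp₁, hrad0]
    have e3 : dist p₃ s.center = 0 := by rw [hp₃, hrad0]
    exact hp₁p₃ ((dist_eq_zero.1 e1).trans (dist_eq_zero.1 e3).symm)
  have h2r : 2 * s.radius ≠ 0 := by
    rw [← key]; positivity
  rw [EuclideanGeometry.angle_eq_abs_oangle_toReal hp₁p₂ hp₂p₃.symm,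
    sin_abs_eq (Real.Angle.neg_pi_lt_toReal _) (Real.Angle.toReal_le_pi _),
    Real.Angle.sin_toReal, eq_div_iff h2r, ← key]
  field_simp

end aux

/-- Three distinct points on a circle of radius `r ≤ 2M` about the origin in `ℝ²`, with
pairwise distances at least `M`, have inscribed angle `∠ u₁ u₂ u₃` between
`arcsin (1/4)` and `2 * arccos (1/4)`. -/
theorem stmt0 (M r : ℝ) (hM : 0 < M) (hr : r ≤ 2 * M)
    (u₁ u₂ u₃ : EuclideanSpace ℝ (Fin 2))
    (h₁ : u₁ ∈ sphere (0 : EuclideanSpace ℝ (Fin 2)) r)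
    (h₂ : u₂ ∈ sphere (0 : EuclideanSpace ℝ (Fin 2)) r)
    (h₃ : u₃ ∈ sphere (0 : EuclideanSpace ℝ (Fin 2)) r)
    (h12 : u₁ ≠ u₂) (h13 : u₁ ≠ u₃) (h23 : u₂ ≠ u₃)
    (d12 : M ≤ dist u₁ u₂) (d13 : M ≤ dist u₁ u₃) (d23 : M ≤ dist u₂ u₃) :
    arcsin (1 / 4) ≤ angle u₁ u₂ u₃ ∧ angle u₁ u₂ u₃ ≤ 2 * arccos (1 / 4) := by
  -- radius is positive
  have hr0 : 0 < r := by
    have e1 : dist u₁ (0 : EuclideanSpace ℝ (Fin 2)) = r := Metric.mem_sphere.1 h₁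
    have e2 : dist u₂ (0 : EuclideanSpace ℝ (Fin 2)) = r := Metric.mem_sphere.1 h₂
    have := dist_triangle u₁ (0 : EuclideanSpace ℝ (Fin 2)) u₂
    rw [dist_comm (0 : EuclideanSpace ℝ (Fin 2)) u₂] at this
    linarith
  set s : EuclideanGeometry.Sphere (EuclideanSpace ℝ (Fin 2)) := ⟨0, r⟩ with hs
  have hs₁ : u₁ ∈ s := EuclideanGeometry.mem_sphere.2 (Metric.mem_sphere.1 h₁)
  have hs₂ : u₂ ∈ s := EuclideanGeometry.mem_sphere.2 (Metric.mem_sphere.1 h₂)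
  have hs₃ : u₃ ∈ s := EuclideanGeometry.mem_sphere.2 (Metric.mem_sphere.1 h₃)
  have hrad : s.radius = r := rfl
  -- sines of the three angles are at least 1/4
  have quarter : ∀ d : ℝ, M ≤ d → (1 : ℝ) / 4 ≤ d / (2 * r) := fun d hd => by
    rw [div_le_div_iff₀ (by norm_num) (by positivity)]
    nlinarith
  have sinB : Real.sin (∠ u₁ u₂ u₃) = dist u₁ u₃ / (2 * r) :=
    sin_angle_eq hs₁ hs₂ hs₃ h12 h13 h23
  have sinA : Real.sin (∠ u₂ u₁ u₃) = dist u₂ u₃ / (2 * r) :=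
    sin_angle_eq hs₂ hs₁ hs₃ h12.symm h23 h13
  have sinC : Real.sin (∠ u₂ u₃ u₁) = dist u₂ u₁ / (2 * r) :=
    sin_angle_eq hs₂ hs₃ hs₁ h23 h12.symm h13.symm
  have key : ∀ p₁ p₂ p₃ : EuclideanSpace ℝ (Fin 2),
      (1 : ℝ) / 4 ≤ Real.sin (∠ p₁ p₂ p₃) → arcsin (1 / 4) ≤ ∠ p₁ p₂ p₃ := by
    intro p₁ p₂ p₃ hsin
    by_contra hlt
    push_neg at hlt
    have h0 : (0 : ℝ) ≤ ∠ p₁ p₂ p₃ := EuclideanGeometry.angle_nonneg _ _ _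
    have harc : Real.arcsin (1 / 4) ≤ π / 2 := Real.arcsin_le_pi_div_two _
    have : Real.sin (∠ p₁ p₂ p₃) < Real.sin (Real.arcsin (1 / 4)) := by
      apply Real.strictMonoOn_sin ⟨by linarith, by linarith⟩
        ⟨by linarith [Real.arcsin_nonneg.2 (by norm_num : (0:ℝ) ≤ 1/4)], harc⟩ hlt
    rw [Real.sin_arcsin (by norm_num) (by norm_num)] at this
    linarith
  have hB : arcsin (1 / 4) ≤ ∠ u₁ u₂ u₃ :=
    key _ _ _ (sinB ▸ quarter _ d13)
  have hA : arcsin (1 / 4) ≤ ∠ u₂ u₁ u₃ :=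
    key _ _ _ (sinA ▸ quarter _ d23)
  have hC : arcsin (1 / 4) ≤ ∠ u₂ u₃ u₁ :=
    key _ _ _ (sinC ▸ quarter _ (dist_comm u₁ u₂ ▸ d12))
  refine ⟨hB, ?_⟩
  have hsum : ∠ u₁ u₂ u₃ + ∠ u₂ u₃ u₁ + ∠ u₃ u₁ u₂ = π :=
    EuclideanGeometry.angle_add_angle_add_angle_eq_pi u₃ h12.symm
  have : ∠ u₃ u₁ u₂ = ∠ u₂ u₁ u₃ := EuclideanGeometry.angle_comm _ _ _
  rw [Real.arccos_eq_pi_div_two_sub_arcsin]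
  linarith
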